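/- Let L ⊆ Q be an extension of Hom-Lie algebras with L semiprime, and suppose that Q is an algebra of quotients of L. Then A(Q) is a left quotient algebra of A_0, where A(Q) is the associative subalgebra of End(Q) generated by {ad_q : q ∈ Q} and A_0 = {μ ∈ A(Q) : μ(L) ⊆ L}. -/

import Mathlib

/-- A Hom-Lie algebra structure on a vector space `Q` over a field `𝔽`, with the
twisting map `α` additionally satisfying condition (2.1):
`α [x,y] = [α x, y] = [x, α y]`. -/
structure HomLieAlgebra (𝔽 : Type*) [Field 𝔽] (Q : Type*) [AddCommGroup Q] [Module 𝔽 Q] where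
  bracket : Q →ₗ[𝔽] Q →ₗ[𝔽] Q
  alpha : Q →ₗ[𝔽] Q
  skew : ∀ x y, bracket x y = - bracket y x
  jacobi : ∀ x y z, bracket (alpha x) (bracket y z) + bracket (alpha y) (bracket z x)
      + bracket (alpha z) (bracket x y) = 0
  comm₁ : ∀ x y, alpha (bracket x y) = bracket (alpha x) y
  comm₂ : ∀ x y, alpha (bracket x y) = bracket x (alpha y)

namespace HomLieAlgebra

variable {𝔽 : Type*} [Field 𝔽] {Q : Type*} [AddCommGroup Q] [Module 𝔽 Q]
variable (H : HomLieAlgebra 𝔽 Q)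

/-- `S` is a Hom-subalgebra: a subspace closed under `α` and the bracket. -/
def IsSubalgebra (S : Submodule 𝔽 Q) : Prop :=
  (∀ x ∈ S, H.alpha x ∈ S) ∧ ∀ x ∈ S, ∀ y ∈ S, H.bracket x y ∈ S

/-- `I` is a Hom-ideal of the Hom-subalgebra `L`:
a subspace `I ⊆ L` with `α(I) ⊆ I` and `[I, L] ⊆ I`. -/
def IsIdealOf (L I : Submodule 𝔽 Q) : Prop :=
  I ≤ L ∧ (∀ x ∈ I, H.alpha x ∈ I) ∧ ∀ x ∈ I, ∀ y ∈ L, H.bracket x y ∈ I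

/-- The α-annihilator of the set `S` inside the subalgebra `M`:
`Ann_M(S) = {x ∈ M | [x, α(y)] = 0 for all y ∈ S}`. -/
def annIn (M : Submodule 𝔽 Q) (S : Set Q) : Set Q :=
  {x | x ∈ M ∧ ∀ y ∈ S, H.bracket x (H.alpha y) = 0}

/-- `I` is an essential Hom-ideal of `L`: it hits every nonzero Hom-ideal of `L`. -/
def IsEssentialIdealOf (L I : Submodule 𝔽 Q) : Prop :=
  H.IsIdealOf L I ∧ ∀ J : Submodule 𝔽 Q, H.IsIdealOf L J → J ≠ ⊥ → I ⊓ J ≠ ⊥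

/-- The Hom-Lie algebra `L` is semiprime: `[I, α(I)] ≠ {0}` for every nonzero
Hom-ideal `I` of `L`. -/
def IsSemiprimeOn (L : Submodule 𝔽 Q) : Prop :=
  ∀ I : Submodule 𝔽 Q, H.IsIdealOf L I → I ≠ ⊥ →
    ∃ x ∈ I, ∃ y ∈ I, H.bracket x (H.alpha y) ≠ 0

/-- The Hom-Lie algebra `L` is prime: `[I, α(J)] ≠ {0}` for all nonzero
Hom-ideals `I`, `J` of `L`. -/
def IsPrimeOn (L : Submodule 𝔽 Q) : Prop :=
  ∀ I J : Submodule 𝔽 Q, H.IsIdealOf L I → I ≠ ⊥ → H.IsIdealOf L J → J ≠ ⊥ →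
    ∃ x ∈ I, ∃ y ∈ J, H.bracket x (H.alpha y) ≠ 0

/-- The iterated brackets `[[…[[q,x₁],x₂],…],xₙ]` with `xᵢ ∈ L` (including `q` itself). -/
inductive IsWord (L : Submodule 𝔽 Q) (q : Q) : Q → Prop
  | base : IsWord L q q
  | step {p : Q} (x : Q) : IsWord L q p → x ∈ L → IsWord L q (H.bracket p x)

/-- `_L(q)`: the linear span in `Q` of `q` together with all the iterated brackets
`[[…[[q,x₁],x₂],…],xₙ]` with `xᵢ ∈ L`. -/
def wordSpan (L : Submodule 𝔽 Q) (q : Q) : Submodule 𝔽 Q :=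
  Submodule.span 𝔽 {p | H.IsWord L q p}

/-- `(L : q) = {x ∈ L | [x, α(_L(q))] ⊆ L}`, as a subspace of `Q`. -/
def quotIdeal (L : Submodule 𝔽 Q) (q : Q) : Submodule 𝔽 Q where
  carrier := {x | x ∈ L ∧ ∀ p ∈ H.wordSpan L q, H.bracket x (H.alpha p) ∈ L}
  add_mem' := by
    rintro a b ⟨haL, ha⟩ ⟨hbL, hb⟩
    refine ⟨L.add_mem haL hbL, fun p hp => ?_⟩
    rw [map_add, LinearMap.add_apply]
    exact L.add_mem (ha p hp) (hb p hp)
  zero_mem' := ⟨L.zero_mem, fun p _ => by simp⟩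
  smul_mem' := by
    rintro c a ⟨haL, ha⟩
    refine ⟨L.smul_mem c haL, fun p hp => ?_⟩
    rw [map_smul, LinearMap.smul_apply]
    exact L.smul_mem c (ha p hp)

/-- `Q` is an algebra of quotients of its Hom-subalgebra `L`: for all `p, q ∈ Q` with
`p ≠ 0` there is `x ∈ (L : q)` with `[x, α(p)] ≠ 0`. -/
def IsAlgebraOfQuotients (L : Submodule 𝔽 Q) : Prop :=
  ∀ p q : Q, p ≠ 0 → ∃ x ∈ H.quotIdeal L q, H.bracket x (H.alpha p) ≠ 0

/-- `Q` is a weak algebra of quotients of its Hom-subalgebra `L`: for every nonzero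
`q ∈ Q` there is `x ∈ L` with `0 ≠ [x, α(q)] ∈ L`. -/
def IsWeakAlgebraOfQuotients (L : Submodule 𝔽 Q) : Prop :=
  ∀ q : Q, q ≠ 0 → ∃ x ∈ L, H.bracket x (H.alpha q) ≠ 0 ∧ H.bracket x (H.alpha q) ∈ L

/-- `Q` is ideally absorbed into `L`: for every nonzero `q ∈ Q` there is a Hom-ideal `I`
of `L` with `Ann_L(I) = {0}` and `{0} ≠ [I, α(q)] ⊆ L`. -/
def IsIdeallyAbsorbed (L : Submodule 𝔽 Q) : Prop :=
  ∀ q : Q, q ≠ 0 → ∃ I : Submodule 𝔽 Q, H.IsIdealOf L I ∧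
    H.annIn L (I : Set Q) = {0} ∧
    (∃ y ∈ I, H.bracket y (H.alpha q) ≠ 0) ∧
    ∀ y ∈ I, H.bracket y (H.alpha q) ∈ (L : Set Q)

/-- The inner derivation `ad_q : p ↦ [α(q), p]`. -/
def ad (q : Q) : Module.End 𝔽 Q := H.bracket (H.alpha q)

end HomLieAlgebra

/-- `A(Q)`: the (possibly non-unital) associative subalgebra of `End(Q)` generated by
the inner derivations `ad_q`, `q ∈ Q`, viewed as a set. -/
def assocAlg {𝔽 Q : Type*} [Field 𝔽] [AddCommGroup Q] [Module 𝔽 Q]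
    (H : HomLieAlgebra 𝔽 Q) : Set (Module.End 𝔽 Q) :=
  ↑(NonUnitalAlgebra.adjoin 𝔽 (Set.range H.ad))

/-- `A₀`: the subalgebra of `A(Q)` of those `μ` with `μ(L) ⊆ L`. -/
def assocAlgZero {𝔽 Q : Type*} [Field 𝔽] [AddCommGroup Q] [Module 𝔽 Q]
    (H : HomLieAlgebra 𝔽 Q) (L : Submodule 𝔽 Q) : Set (Module.End 𝔽 Q) :=
  {μ ∈ assocAlg H | ∀ a ∈ L, μ a ∈ L}

section Aux

variable {𝔽 : Type*} [Field 𝔽] {Q : Type*} [AddCommGroup Q] [Module 𝔽 Q]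

namespace HomLieAlgebra

variable (H : HomLieAlgebra 𝔽 Q)

lemma brl (x y : Q) : H.bracket (H.alpha x) y = H.alpha (H.bracket x y) :=
  (H.comm₁ x y).symm

lemma brr (x y : Q) : H.bracket x (H.alpha y) = H.alpha (H.bracket x y) :=
  (H.comm₂ x y).symm

lemma brlr (x y : Q) : H.bracket (H.alpha x) y = H.bracket x (H.alpha y) := by
  rw [H.brl, H.brr]

lemma jac (a b c : Q) :
    H.bracket (H.alpha a) (H.bracket b c)
      = -H.bracket (H.alpha b) (H.bracket c a) - H.bracket (H.alpha c) (H.bracket a b) := by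
  have h := H.jacobi a b c
  rw [add_assoc] at h
  rw [eq_neg_of_add_eq_zero_left h]
  abel

lemma br_alpha_antisymm (x y : Q) :
    H.bracket x (H.alpha y) = - H.bracket y (H.alpha x) := by
  rw [H.brr, H.brr, H.skew x y, map_neg]

variable {L : Submodule 𝔽 Q}

lemma word_mem {q w : Q} (h : H.IsWord L q w) : w ∈ H.wordSpan L q :=
  Submodule.subset_span h

lemma self_mem_wordSpan (q : Q) : q ∈ H.wordSpan L q :=
  H.word_mem (IsWord.base)

lemma mem_quotIdeal {q x : Q} :
    x ∈ H.quotIdeal L q ↔ x ∈ L ∧ ∀ p ∈ H.wordSpan L q, H.bracket x (H.alpha p) ∈ L :=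
  Iff.rfl

/-- `(L : q)` is a Hom-ideal of `L`. -/
lemma quotIdeal_isIdealOf (hL : H.IsSubalgebra L) (q : Q) :
    H.IsIdealOf L (H.quotIdeal L q) := by
  refine ⟨fun x hx => hx.1, ?_, ?_⟩
  · rintro x ⟨hxL, hx⟩
    refine ⟨hL.1 x hxL, fun p hp => ?_⟩
    rw [H.brl]
    exact hL.1 _ (hx p hp)
  · rintro x ⟨hxL, hx⟩ y hyL
    refine ⟨hL.2 x hxL y hyL, ?_⟩
    have : H.wordSpan L q ≤ Submodule.comap
        ((H.bracket (H.bracket x y)).comp H.alpha) L := by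
      rw [HomLieAlgebra.wordSpan, Submodule.span_le]
      intro w hw
      simp only [SetLike.mem_coe, Submodule.mem_comap, LinearMap.comp_apply]
      -- goal: H.bracket (H.bracket x y) (H.alpha w) ∈ L
      have e1 : H.bracket (H.bracket x y) (H.alpha w)
          = - H.bracket (H.alpha w) (H.bracket x y) := by
        rw [H.skew]
      rw [e1, H.jac w x y]
      have t1 : H.bracket (H.alpha x) (H.bracket y w) ∈ L := by
        rw [H.brlr]
        have : H.bracket y w = - H.bracket w y := H.skew y w
        rw [this, map_neg, map_neg]
        exact L.neg_mem (hx _ (H.word_mem (IsWord.step y hw hyL)))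
      have t2 : H.bracket (H.alpha y) (H.bracket w x) ∈ L := by
        rw [H.brlr]
        have hα : H.alpha (H.bracket w x) ∈ L := by
          have : H.bracket w x = - H.bracket x w := H.skew w x
          rw [this, map_neg]
          refine L.neg_mem ?_
          rw [← H.brr]
          exact hx _ (H.word_mem hw)
        exact hL.2 y hyL _ hα
      rw [neg_sub, sub_neg_eq_add]
      exact L.add_mem t2 t1
    intro p hp
    exact this hp

end HomLieAlgebra

end Aux
section Aux2

variable {𝔽 : Type*} [Field 𝔽] {Q : Type*} [AddCommGroup Q] [Module 𝔽 Q]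

namespace HomLieAlgebra

variable (H : HomLieAlgebra 𝔽 Q) (L : Submodule 𝔽 Q)

/-- The α-annihilator of `I` in `L` is zero. -/
def AnnZero (I : Submodule 𝔽 Q) : Prop :=
  ∀ x ∈ L, (∀ i ∈ I, H.bracket x (H.alpha i) = 0) → x = 0

variable {L}

lemma isIdealOf_self (hL : H.IsSubalgebra L) : H.IsIdealOf L L :=
  ⟨le_rfl, hL.1, hL.2⟩

lemma isIdealOf_inf {I J : Submodule 𝔽 Q} (hI : H.IsIdealOf L I) (hJ : H.IsIdealOf L J) :
    H.IsIdealOf L (I ⊓ J) :=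
  ⟨inf_le_left.trans hI.1, fun x hx => ⟨hI.2.1 x hx.1, hJ.2.1 x hx.2⟩,
    fun x hx y hy => ⟨hI.2.2 x hx.1 y hy, hJ.2.2 x hx.2 y hy⟩⟩

lemma annZero_self (hq : H.IsAlgebraOfQuotients L) : H.AnnZero L L := by
  intro x hxL hx
  by_contra hx0
  obtain ⟨y, hy, hyne⟩ := hq x x hx0
  exact hyne (by rw [H.br_alpha_antisymm y x, hx y hy.1, neg_zero])

lemma annZero_quotIdeal (hq : H.IsAlgebraOfQuotients L) (u : Q) :
    H.AnnZero L (H.quotIdeal L u) := by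
  intro x hxL hx
  by_contra hx0
  obtain ⟨y, hy, hyne⟩ := hq x u hx0
  exact hyne (by rw [H.br_alpha_antisymm y x, hx y hy, neg_zero])

variable (L) in
/-- The α-annihilator of `W` in `L`, as a submodule. -/
def annK (W : Submodule 𝔽 Q) : Submodule 𝔽 Q where
  carrier := {x | x ∈ L ∧ ∀ z ∈ W, H.bracket x (H.alpha z) = 0}
  add_mem' := by
    rintro a b ⟨haL, ha⟩ ⟨hbL, hb⟩
    exact ⟨L.add_mem haL hbL, fun z hz => by
      rw [map_add, LinearMap.add_apply, ha z hz, hb z hz, add_zero]⟩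
  zero_mem' := ⟨L.zero_mem, fun z _ => by simp⟩
  smul_mem' := by
    rintro c a ⟨haL, ha⟩
    exact ⟨L.smul_mem c haL, fun z hz => by
      rw [map_smul, LinearMap.smul_apply, ha z hz, smul_zero]⟩

lemma annK_isIdealOf (hL : H.IsSubalgebra L) {W : Submodule 𝔽 Q}
    (hW : H.IsIdealOf L W) : H.IsIdealOf L (H.annK L W) := by
  refine ⟨fun x hx => hx.1, ?_, ?_⟩
  · rintro x ⟨hxL, hx⟩
    refine ⟨hL.1 x hxL, fun z hz => ?_⟩
    rw [H.brl, hx z hz, map_zero]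
  · rintro y ⟨hyL, hy⟩ w hwL
    refine ⟨hL.2 y hyL w hwL, fun z hz => ?_⟩
    -- goal : [[y,w], α z] = 0
    have e1 : H.bracket (H.bracket y w) (H.alpha z)
        = - H.bracket (H.alpha z) (H.bracket y w) := by rw [H.skew]
    rw [e1, H.jac z y w]
    have t1 : H.bracket (H.alpha y) (H.bracket w z) = 0 := by
      rw [H.brlr]
      have : H.bracket w z = - H.bracket z w := H.skew w z
      rw [this, map_neg, map_neg, hy _ (hW.2.2 z hz w hwL), neg_zero]
    have t2 : H.bracket (H.alpha w) (H.bracket z y) = 0 := by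
      rw [H.brlr]
      have hzy : H.alpha (H.bracket z y) = 0 := by
        have : H.bracket z y = - H.bracket y z := H.skew z y
        rw [this, map_neg, ← H.brr, hy z hz, neg_zero]
      rw [hzy, map_zero]
    rw [t1, t2]
    simp

lemma annZero_inf (hL : H.IsSubalgebra L) (hsp : H.IsSemiprimeOn L)
    {I J : Submodule 𝔽 Q} (hI : H.IsIdealOf L I) (hJ : H.IsIdealOf L J)
    (aI : H.AnnZero L I) (aJ : H.AnnZero L J) : H.AnnZero L (I ⊓ J) := by
  intro x hxL hx
  by_contra hx0
  set K := H.annK L (I ⊓ J) with hK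
  have hKideal : H.IsIdealOf L K := H.annK_isIdealOf hL (H.isIdealOf_inf hI hJ)
  have hxK : x ∈ K := ⟨hxL, hx⟩
  -- find y = [x, α i] ≠ 0 in K ⊓ I
  have hyex : ∃ i ∈ I, H.bracket x (H.alpha i) ≠ 0 := by
    by_contra h
    push_neg at h
    exact hx0 (aI x hxL fun i hi => h i hi)
  obtain ⟨i, hi, hyne⟩ := hyex
  set y := H.bracket x (H.alpha i) with hy
  have hyK : y ∈ K := hKideal.2.2 x hxK _ (hL.1 i (hI.1 hi))
  have hyI : y ∈ I := by
    rw [hy, H.br_alpha_antisymm]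
    exact I.neg_mem (hI.2.2 i hi _ (hL.1 x hxL))
  have hzex : ∃ j ∈ J, H.bracket y (H.alpha j) ≠ 0 := by
    by_contra h
    push_neg at h
    exact hyne (aJ y (hI.1 hyI) fun j hj => h j hj)
  obtain ⟨j, hj, hzne⟩ := hzex
  set z := H.bracket y (H.alpha j) with hz
  have hzK : z ∈ K := hKideal.2.2 y hyK _ (hL.1 j (hJ.1 hj))
  have hzI : z ∈ I := hI.2.2 y hyI _ (hL.1 j (hJ.1 hj))
  have hzJ : z ∈ J := by
    rw [hz, H.br_alpha_antisymm]
    exact J.neg_mem (hJ.2.2 j hj _ (hL.1 y (hI.1 hyI)))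
  have hW : H.IsIdealOf L (K ⊓ (I ⊓ J)) :=
    H.isIdealOf_inf hKideal (H.isIdealOf_inf hI hJ)
  have hne : K ⊓ (I ⊓ J) ≠ ⊥ :=
    Submodule.ne_bot_iff _ |>.mpr ⟨z, ⟨hzK, hzI, hzJ⟩, hzne⟩
  obtain ⟨a, ha, b, hb, hab⟩ := hsp _ hW hne
  exact hab (ha.1.2 b hb.2)

/-- density of ideals with zero annihilator -/
lemma dense_of_annZero (hL : H.IsSubalgebra L) (hq : H.IsAlgebraOfQuotients L)
    {I : Submodule 𝔽 Q} (hI : H.IsIdealOf L I) (aI : H.AnnZero L I) :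
    ∀ c : Q, c ≠ 0 → ∃ i ∈ I, H.bracket (H.alpha i) c ≠ 0 := by
  intro c hc
  by_contra h
  push_neg at h
  obtain ⟨x, hx, hne⟩ := hq c c hc
  set ℓ := H.bracket x (H.alpha c) with hℓ
  have hℓL : ℓ ∈ L := hx.2 c (H.self_mem_wordSpan c)
  have hzero : ∀ i ∈ I, H.bracket ℓ (H.alpha i) = 0 := by
    intro i hi
    have key : H.bracket (H.alpha i) ℓ = 0 := by
      rw [hℓ, H.jac i x (H.alpha c)]
      have t1 : H.bracket (H.alpha (H.alpha c)) (H.bracket i x) = 0 := by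
        have hix : H.bracket i x ∈ I := hI.2.2 i hi x hx.1
        rw [H.brl]
        have : H.bracket (H.alpha c) (H.bracket i x) = 0 := by
          have e : H.bracket c (H.bracket i x) = - H.bracket (H.bracket i x) c := H.skew _ _
          rw [H.brl, e, map_neg, ← H.brl, h _ hix, neg_zero]
        rw [this, map_zero]
      have t2 : H.bracket (H.alpha x) (H.bracket (H.alpha c) i) = 0 := by
        have : H.bracket (H.alpha c) i = 0 := by
          have e : H.bracket c i = - H.bracket i c := H.skew _ _
          rw [H.brl, e, map_neg, ← H.brl, h i hi, neg_zero]
        rw [this, map_zero]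
      rw [t1, t2]
      simp
    rw [H.skew ℓ (H.alpha i), key, neg_zero]
  exact hne (aI ℓ hℓL hzero)

end HomLieAlgebra

end Aux2
section Aux3

variable {𝔽 : Type*} [Field 𝔽] {Q : Type*} [AddCommGroup Q] [Module 𝔽 Q]

/-- Levels of nested brackets over `L` with at most `k` occurrences of letters from `S`. -/
inductive HLev (H : HomLieAlgebra 𝔽 Q) (L : Submodule 𝔽 Q) (S : Set Q) : ℕ → Q → Prop
  | base {k a} : a ∈ L → HLev H L S k a
  | mono {k g} : HLev H L S k g → HLev H L S (k + 1) g
  | alpha {k g} : HLev H L S k g → HLev H L S k (H.alpha g)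
  | brL {k g x} : HLev H L S k g → x ∈ L → HLev H L S k (H.bracket g x)
  | step {k g u} : HLev H L S k g → u ∈ S → HLev H L S (k + 1) (H.bracket u g)

/-- The span of the level-`k` elements. -/
def hlev (H : HomLieAlgebra 𝔽 Q) (L : Submodule 𝔽 Q) (S : Set Q) (k : ℕ) : Submodule 𝔽 Q :=
  Submodule.span 𝔽 {g | HLev H L S k g}

namespace HomLieAlgebra

variable (H : HomLieAlgebra 𝔽 Q) {L : Submodule 𝔽 Q} {S : Set Q}

lemma hlev_base {k : ℕ} : L ≤ hlev H L S k :=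
  fun _ ha => Submodule.subset_span (HLev.base ha)

lemma hlev_mono_succ {k : ℕ} : hlev H L S k ≤ hlev H L S (k + 1) := by
  rw [hlev, Submodule.span_le]
  exact fun w hw => Submodule.subset_span (HLev.mono hw)

lemma hlev_mono {k k' : ℕ} (h : k ≤ k') : hlev H L S k ≤ hlev H L S k' := by
  induction h with
  | refl => exact le_rfl
  | step _ ih => exact ih.trans H.hlev_mono_succ

lemma hlev_zero_raw (hL : H.IsSubalgebra L) {k : ℕ} {g : Q} (h : HLev H L S k g) :
    k = 0 → g ∈ L := by
  induction h with
  | base ha => exact fun _ => ha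
  | mono _ _ => exact fun h0 => absurd h0 (Nat.succ_ne_zero _)
  | alpha _ ih => exact fun h0 => hL.1 _ (ih h0)
  | brL _ hx ih => exact fun h0 => hL.2 _ (ih h0) _ hx
  | step _ _ _ => exact fun h0 => absurd h0 (Nat.succ_ne_zero _)

lemma hlev_zero_le (hL : H.IsSubalgebra L) : hlev H L S 0 ≤ L := by
  rw [hlev, Submodule.span_le]
  exact fun w hw => H.hlev_zero_raw hL hw rfl

lemma hlev_alpha {k : ℕ} {g : Q} (hg : g ∈ hlev H L S k) : H.alpha g ∈ hlev H L S k := by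
  have : hlev H L S k ≤ Submodule.comap H.alpha (hlev H L S k) := by
    rw [hlev, Submodule.span_le]
    intro w hw
    simp only [SetLike.mem_coe, Submodule.mem_comap]
    exact Submodule.subset_span (HLev.alpha hw)
  exact this hg

lemma hlev_brL {k : ℕ} {g x : Q} (hg : g ∈ hlev H L S k) (hx : x ∈ L) :
    H.bracket g x ∈ hlev H L S k := by
  have : hlev H L S k ≤ Submodule.comap (H.bracket.flip x) (hlev H L S k) := by
    rw [hlev, Submodule.span_le]
    intro w hw
    simp only [SetLike.mem_coe, Submodule.mem_comap, LinearMap.flip_apply]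
    exact Submodule.subset_span (HLev.brL hw hx)
  have h2 := this hg
  simpa only [Submodule.mem_comap, LinearMap.flip_apply] using h2

lemma hlev_step {k : ℕ} {g u : Q} (hu : u ∈ S) (hg : g ∈ hlev H L S k) :
    H.bracket u g ∈ hlev H L S (k + 1) := by
  have : hlev H L S k ≤ Submodule.comap (H.bracket u) (hlev H L S (k + 1)) := by
    rw [hlev, Submodule.span_le]
    intro w hw
    simp only [SetLike.mem_coe, Submodule.mem_comap]
    exact Submodule.subset_span (HLev.step hw hu)
  exact this hg

end HomLieAlgebra

/-- `hlevN k` is `I` for `k = 0` and `hlev (k-1)` otherwise. -/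
def hlevN (H : HomLieAlgebra 𝔽 Q) (L : Submodule 𝔽 Q) (S : Set Q) (I : Submodule 𝔽 Q) :
    ℕ → Submodule 𝔽 Q
  | 0 => I
  | (k + 1) => hlev H L S k

namespace HomLieAlgebra

variable (H : HomLieAlgebra 𝔽 Q) {L : Submodule 𝔽 Q} {S : Set Q} {I : Submodule 𝔽 Q}

/-- The key lemma: bracketing with `α i`, `i ∈ I`, reduces the level by one. -/
lemma key1 (hL : H.IsSubalgebra L)
    (hI1 : I ≤ L) (hI2 : ∀ i ∈ I, H.alpha i ∈ I)
    (hI3 : ∀ i ∈ I, ∀ x ∈ L, H.bracket i x ∈ I)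
    (habs : ∀ u ∈ S, ∀ i ∈ I, H.bracket i (H.alpha u) ∈ L) :
    ∀ {k : ℕ} {g : Q}, HLev H L S k g → ∀ i ∈ I,
      H.bracket (H.alpha i) g ∈ hlevN H L S I k := by
  have hIN : ∀ k, I ≤ hlevN H L S I k := by
    intro k
    match k with
    | 0 => exact le_rfl
    | (k + 1) => exact hI1.trans H.hlev_base
  have hNmono : ∀ k, hlevN H L S I k ≤ hlevN H L S I (k + 1) := by
    intro k
    match k with
    | 0 => exact hI1.trans H.hlev_base
    | (k + 1) => exact H.hlev_mono_succ
  have hNalpha : ∀ k, ∀ m ∈ hlevN H L S I k, H.alpha m ∈ hlevN H L S I k := by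
    intro k
    match k with
    | 0 => exact hI2
    | (k + 1) => exact fun m hm => H.hlev_alpha hm
  have hNbr : ∀ k, ∀ m ∈ hlevN H L S I k, ∀ x ∈ L, H.bracket m x ∈ hlevN H L S I k := by
    intro k
    match k with
    | 0 => exact hI3
    | (k + 1) => exact fun m hm x hx => H.hlev_brL hm hx
  intro k g h
  induction h with
  | base ha =>
    intro i hi
    exact hIN _ (hI3 _ (hI2 i hi) _ ha)
  | mono _ ih =>
    intro i hi
    exact hNmono _ (ih i hi)
  | alpha _ ih =>
    intro i hi
    rw [H.brr]
    exact hNalpha _ _ (ih i hi)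
  | brL _ hx ih =>
    rename_i k' g' x' _
    intro i hi
    rw [H.jac i g' x']
    have c1 : H.bracket (H.alpha g') (H.bracket x' i) ∈ hlevN H L S I k' := by
      have hi0 : H.bracket i x' ∈ I := hI3 i hi x' hx
      rw [H.skew x' i, map_neg]
      refine neg_mem ?_
      rw [H.brlr g' (H.bracket i x'), H.skew]
      exact neg_mem (ih _ hi0)
    have c2 : H.bracket (H.alpha x') (H.bracket i g') ∈ hlevN H L S I k' := by
      rw [H.brlr x' (H.bracket i g'), ← H.brl i g', H.skew]
      exact neg_mem (hNbr _ _ (ih i hi) x' hx)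
    exact sub_mem (neg_mem c1) c2
  | step h hu ih =>
    rename_i k' g' u
    intro i hi
    rw [H.jac i u g']
    have tB : H.bracket (H.alpha g') (H.bracket i u) ∈ hlev H L S k' := by
      rw [H.brlr g' (H.bracket i u), ← H.brr i u]
      exact Submodule.subset_span (HLev.brL h (habs u hu i hi))
    have tA : H.bracket (H.alpha u) (H.bracket g' i) ∈ hlev H L S k' := by
      match k' with
      | 0 =>
        have hgL : g' ∈ L := H.hlev_zero_raw hL h rfl
        have hz : H.bracket g' i ∈ I := by
          rw [H.skew g' i]
          exact neg_mem (hI3 i hi g' hgL)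
        rw [H.skew (H.alpha u) (H.bracket g' i)]
        exact neg_mem (Submodule.subset_span (HLev.base (habs u hu _ hz)))
      | (k'' + 1) =>
        have e : H.alpha (H.bracket g' i) = - H.bracket (H.alpha i) g' := by
          rw [H.skew g' i, map_neg, H.brl]
        rw [H.brlr u (H.bracket g' i), e, map_neg]
        exact neg_mem (H.hlev_step hu (ih i hi))
    exact sub_mem (neg_mem tA) tB

lemma key2 (hL : H.IsSubalgebra L)
    (hI1 : I ≤ L) (hI2 : ∀ i ∈ I, H.alpha i ∈ I)
    (hI3 : ∀ i ∈ I, ∀ x ∈ L, H.bracket i x ∈ I)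
    (habs : ∀ u ∈ S, ∀ i ∈ I, H.bracket i (H.alpha u) ∈ L) :
    ∀ i ∈ I, ∀ k : ℕ, ∀ g ∈ hlev H L S k,
      H.bracket (H.alpha i) g ∈ hlevN H L S I k := by
  intro i hi k g hg
  have : hlev H L S k ≤ Submodule.comap (H.bracket (H.alpha i)) (hlevN H L S I k) := by
    rw [hlev, Submodule.span_le]
    intro w hw
    simp only [SetLike.mem_coe, Submodule.mem_comap]
    exact H.key1 hL hI1 hI2 hI3 habs hw i hi
  exact this hg

end HomLieAlgebra

end Aux3
section Aux4

variable {𝔽 : Type*} [Field 𝔽] {Q : Type*} [AddCommGroup Q] [Module 𝔽 Q]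

namespace HomLieAlgebra

variable (H : HomLieAlgebra 𝔽 Q) {L : Submodule 𝔽 Q} {S : Set Q} {I : Submodule 𝔽 Q}

lemma chain (hL : H.IsSubalgebra L)
    (hI1 : I ≤ L) (hI2 : ∀ i ∈ I, H.alpha i ∈ I)
    (hI3 : ∀ i ∈ I, ∀ x ∈ L, H.bracket i x ∈ I)
    (habs : ∀ u ∈ S, ∀ i ∈ I, H.bracket i (H.alpha u) ∈ L)
    (hdense : ∀ c : Q, c ≠ 0 → ∃ i ∈ I, H.bracket (H.alpha i) c ≠ 0) :
    ∀ (N : ℕ) (c : Q), c ≠ 0 → ∃ ν : Module.End 𝔽 Q,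
      ν ∈ NonUnitalAlgebra.adjoin 𝔽 (Set.range H.ad) ∧ (∀ a ∈ L, ν a ∈ L) ∧
      (∀ k : ℕ, ∀ g ∈ hlev H L S (k + N + 1), ν g ∈ hlev H L S k) ∧ ν c ≠ 0 := by
  intro N
  induction N with
  | zero =>
    intro c hc
    obtain ⟨i, hi, hic⟩ := hdense c hc
    refine ⟨H.ad i, NonUnitalAlgebra.subset_adjoin 𝔽 ⟨i, rfl⟩, ?_, ?_, hic⟩
    · intro a ha
      exact hL.2 _ (hL.1 i (hI1 hi)) a ha
    · intro k g hg
      exact H.key2 hL hI1 hI2 hI3 habs i hi (k + 1) g hg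
  | succ N ihN =>
    intro c hc
    obtain ⟨ν, hν1, hν2, hν3, hν4⟩ := ihN c hc
    obtain ⟨i, hi, hic⟩ := hdense _ hν4
    refine ⟨H.ad i * ν, mul_mem (NonUnitalAlgebra.subset_adjoin 𝔽 ⟨i, rfl⟩) hν1, ?_, ?_, ?_⟩
    · intro a ha
      rw [Module.End.mul_apply]
      exact hL.2 _ (hL.1 i (hI1 hi)) _ (hν2 a ha)
    · intro k g hg
      have e : k + (N + 1) + 1 = (k + 1) + N + 1 := by omega
      rw [e] at hg
      have h1 : ν g ∈ hlev H L S (k + 1) := hν3 (k + 1) g hg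
      rw [Module.End.mul_apply]
      exact H.key2 hL hI1 hI2 hI3 habs i hi (k + 1) _ h1
    · have : (H.ad i * ν) c = H.bracket (H.alpha i) (ν c) := rfl
      rw [this]
      exact hic

variable (L) in
lemma bound {q : Module.End 𝔽 Q}
    (hq : q ∈ NonUnitalAlgebra.adjoin 𝔽 (Set.range H.ad)) :
    ∃ (S : Finset Q) (N : ℕ), ∀ S' : Finset Q, S ⊆ S' →
      ∀ k : ℕ, ∀ g ∈ hlev H L (↑S' : Set Q) k, q g ∈ hlev H L (↑S' : Set Q) (k + N) := by
  classical
  induction hq using NonUnitalAlgebra.adjoin_induction with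
  | mem x hx =>
    obtain ⟨v, rfl⟩ := hx
    refine ⟨{v}, 1, ?_⟩
    intro S' hS' k g hg
    have hv : v ∈ (↑S' : Set Q) := hS' (Finset.mem_singleton_self v)
    show H.bracket (H.alpha v) g ∈ _
    rw [H.brl]
    exact H.hlev_alpha (H.hlev_step hv hg)
  | add x y hx hy ihx ihy =>
    obtain ⟨S1, N1, h1⟩ := ihx
    obtain ⟨S2, N2, h2⟩ := ihy
    refine ⟨S1 ∪ S2, max N1 N2, ?_⟩
    intro S' hS' k g hg
    rw [LinearMap.add_apply]
    have e1 := h1 S' ((Finset.union_subset_iff.mp hS').1) k g hg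
    have e2 := h2 S' ((Finset.union_subset_iff.mp hS').2) k g hg
    exact add_mem (H.hlev_mono (Nat.add_le_add_left (le_max_left _ _) k) e1)
      (H.hlev_mono (Nat.add_le_add_left (le_max_right _ _) k) e2)
  | zero =>
    refine ⟨∅, 0, ?_⟩
    intro S' _ k g _
    rw [LinearMap.zero_apply]
    exact zero_mem _
  | mul x y hx hy ihx ihy =>
    obtain ⟨S1, N1, h1⟩ := ihx
    obtain ⟨S2, N2, h2⟩ := ihy
    refine ⟨S1 ∪ S2, N1 + N2, ?_⟩
    intro S' hS' k g hg
    rw [Module.End.mul_apply]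
    have e2 := h2 S' ((Finset.union_subset_iff.mp hS').2) k g hg
    have e1 := h1 S' ((Finset.union_subset_iff.mp hS').1) (k + N2) _ e2
    rw [show k + (N1 + N2) = k + N2 + N1 from by omega]
    exact e1
  | smul r x hx ihx =>
    obtain ⟨S1, N1, h1⟩ := ihx
    refine ⟨S1, N1, ?_⟩
    intro S' hS' k g hg
    rw [LinearMap.smul_apply]
    exact Submodule.smul_mem _ r (h1 S' hS' k g hg)

lemma inf_good (hL : H.IsSubalgebra L) (hq : H.IsAlgebraOfQuotients L)
    (hsp : H.IsSemiprimeOn L) (S : Finset Q) :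
    H.IsIdealOf L ((S.inf fun u => H.quotIdeal L u) ⊓ L) ∧
      H.AnnZero L ((S.inf fun u => H.quotIdeal L u) ⊓ L) := by
  classical
  induction S using Finset.induction_on with
  | empty =>
    rw [Finset.inf_empty, top_inf_eq]
    exact ⟨H.isIdealOf_self hL, H.annZero_self hq⟩
  | insert u T hu ih =>
    rw [Finset.inf_insert, inf_assoc]
    exact ⟨H.isIdealOf_inf (H.quotIdeal_isIdealOf hL u) ih.1,
      H.annZero_inf hL hsp (H.quotIdeal_isIdealOf hL u) ih.1
        (H.annZero_quotIdeal hq u) ih.2⟩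

end HomLieAlgebra

end Aux4
/-- If `L` is a semiprime Hom-subalgebra of `Q` and `Q` is an algebra of quotients
of `L`, then `A(Q)` is a left quotient algebra of `A₀`. -/
theorem assocAlg_leftQuotient_of_isAlgebraOfQuotients
    {𝔽 Q : Type*} [Field 𝔽] [AddCommGroup Q] [Module 𝔽 Q]
    (H : HomLieAlgebra 𝔽 Q) (L : Submodule 𝔽 Q) (hL : H.IsSubalgebra L)
    (hsp : H.IsSemiprimeOn L) (hq : H.IsAlgebraOfQuotients L) :
    ∀ p q : Module.End 𝔽 Q, p ∈ assocAlg H → q ∈ assocAlg H → p ≠ 0 →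
      ∃ x ∈ assocAlgZero H L, x * p ≠ 0 ∧ x * q ∈ assocAlgZero H L := by
  intro p q hpA hqA hp
  have hqA' : q ∈ NonUnitalAlgebra.adjoin 𝔽 (Set.range H.ad) := hqA
  obtain ⟨S, N, hbound⟩ := H.bound L hqA'
  set I : Submodule 𝔽 Q := (S.inf fun u => H.quotIdeal L u) ⊓ L with hIdef
  obtain ⟨hIideal, hIann⟩ := H.inf_good hL hq hsp S
  have hI1 : I ≤ L := hIideal.1
  have hI2 : ∀ i ∈ I, H.alpha i ∈ I := hIideal.2.1
  have hI3 : ∀ i ∈ I, ∀ x ∈ L, H.bracket i x ∈ I := hIideal.2.2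
  have habs : ∀ u ∈ (↑S : Set Q), ∀ i ∈ I, H.bracket i (H.alpha u) ∈ L := by
    intro u hu i hi
    have h2 : (S.inf fun u => H.quotIdeal L u) ≤ H.quotIdeal L u := Finset.inf_le hu
    exact (h2 (inf_le_left (a := S.inf fun u => H.quotIdeal L u) (b := L) hi)).2 u (H.self_mem_wordSpan u)
  have hdense : ∀ c : Q, c ≠ 0 → ∃ i ∈ I, H.bracket (H.alpha i) c ≠ 0 :=
    H.dense_of_annZero hL hq hIideal hIann
  obtain ⟨b, hb⟩ : ∃ b, p b ≠ 0 := by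
    by_contra h
    push_neg at h
    exact hp (LinearMap.ext fun b => by rw [h b, LinearMap.zero_apply])
  obtain ⟨ν, hν1, hν2, hν3, hν4⟩ :=
    H.chain hL hI1 hI2 hI3 habs hdense N (p b) hb
  refine ⟨ν, ⟨hν1, hν2⟩, ?_, ?_⟩
  · intro h0
    apply hν4
    have := LinearMap.ext_iff.mp h0 b
    rwa [Module.End.mul_apply, LinearMap.zero_apply] at this
  · refine ⟨mul_mem hν1 hqA', ?_⟩
    intro a ha
    rw [Module.End.mul_apply]
    have h1 : a ∈ hlev H L (↑S : Set Q) 0 := Submodule.subset_span (HLev.base ha)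
    have h2 : q a ∈ hlev H L (↑S : Set Q) (0 + N) := hbound S (Finset.Subset.refl S) 0 a h1
    have h3 : q a ∈ hlev H L (↑S : Set Q) (0 + N + 1) := H.hlev_mono_succ h2
    exact H.hlev_zero_le hL (hν3 0 _ h3)
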